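/- In any residuated lattice, if elements a, b, c, ⊤ satisfy: ⊤ = 1 ∨ a, ⊤·c = ⊤, ⊤·b = b, c·b ≤ c, c·b ≤ 1, b ∨ c = b ∨ 1, and b ≤ ⊤, then c ∨ a = ⊤. -/
import Mathlib


/-- A residuated lattice: a lattice-ordered monoid with left and right residuals. -/
class ResiduatedLattice (α : Type*) extends Lattice α, Monoid α where
  ldiv : α → α → α
  rdiv : α → α → α
  mul_le_iff_le_ldiv : ∀ a b c : α, a * b ≤ c ↔ b ≤ ldiv a c
  mul_le_iff_le_rdiv : ∀ a b c : α, a * b ≤ c ↔ a ≤ rdiv c b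

theorem stmt6 {α : Type*} [ResiduatedLattice α] (a b c T : α)
    (h1 : T = 1 ⊔ a) (h2 : T * c = T) (h3 : T * b = b)
    (h4 : c * b ≤ c) (h5 : c * b ≤ 1) (h6 : b ⊔ c = b ⊔ 1) (h7 : b ≤ T) :
    c ⊔ a = T := by
  have lmono : ∀ x y z : α, y ≤ z → x * y ≤ x * z := by
    intro x y z h
    rw [ResiduatedLattice.mul_le_iff_le_ldiv]
    exact le_trans h ((ResiduatedLattice.mul_le_iff_le_ldiv x z (x*z)).mp le_rfl)
  have rmono : ∀ x y z : α, y ≤ z → y * x ≤ z * x := by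
    intro x y z h
    rw [ResiduatedLattice.mul_le_iff_le_rdiv]
    exact le_trans h ((ResiduatedLattice.mul_le_iff_le_rdiv z x (z*x)).mp le_rfl)
  have distr : ∀ x y z : α, (x ⊔ y) * z = x * z ⊔ y * z := by
    intro x y z
    apply le_antisymm
    · rw [ResiduatedLattice.mul_le_iff_le_rdiv]
      exact sup_le ((ResiduatedLattice.mul_le_iff_le_rdiv x z _).mp le_sup_left)
        ((ResiduatedLattice.mul_le_iff_le_rdiv y z _).mp le_sup_right)
    · exact sup_le (rmono z x _ le_sup_left) (rmono z y _ le_sup_right)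
  have distl : ∀ x y z : α, x * (y ⊔ z) = x * y ⊔ x * z := by
    intro x y z
    apply le_antisymm
    · rw [ResiduatedLattice.mul_le_iff_le_ldiv]
      exact sup_le ((ResiduatedLattice.mul_le_iff_le_ldiv x y _).mp le_sup_left)
        ((ResiduatedLattice.mul_le_iff_le_ldiv x z _).mp le_sup_right)
    · exact sup_le (lmono x y _ le_sup_left) (lmono x z _ le_sup_right)
  -- a*b ≤ b
  have hab : a * b ≤ b :=
    le_trans (rmono b a T (h1 ▸ le_sup_right)) (le_of_eq h3)
  -- T = c ⊔ a*c
  have hT : T = c ⊔ a * c := by rw [← h2, h1, distr, one_mul]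
  -- b ≤ c ⊔ a
  have hb : b ≤ c ⊔ a := by
    calc b = T * b := h3.symm
      _ = (c ⊔ a * c) * b := by rw [← hT]
      _ = c * b ⊔ a * (c * b) := by rw [distr, mul_assoc]
      _ ≤ c ⊔ a * 1 := sup_le_sup h4 (lmono a _ _ h5)
      _ = c ⊔ a := by rw [mul_one]
  apply le_antisymm
  · apply sup_le
    · have : c ≤ b ⊔ 1 := h6 ▸ le_sup_right
      exact le_trans this (sup_le h7 (h1 ▸ le_sup_left))
    · exact h1 ▸ le_sup_right
  · calc T = c ⊔ a * c := hT
      _ ≤ c ⊔ a * (b ⊔ 1) := sup_le_sup le_rfl (lmono a _ _ (h6 ▸ le_sup_right))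
      _ = c ⊔ (a * b ⊔ a) := by rw [distl, mul_one]
      _ ≤ c ⊔ (b ⊔ a) := sup_le_sup le_rfl (sup_le_sup hab le_rfl)
      _ ≤ c ⊔ ((c ⊔ a) ⊔ a) := sup_le_sup le_rfl (sup_le_sup hb le_rfl)
      _ = c ⊔ a := by rw [sup_assoc, sup_idem, ← sup_assoc, sup_idem]
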